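/- Let n ≥ 5. Every element of Alt(n) can be written as a product of at most (n+1)/2 permutations each of which is a product of two disjoint transpositions. -/

import Mathlib

open Equiv Equiv.Perm

private lemma key_aux (n : ℕ) (hn : 5 ≤ n) :
    ∀ s : ℕ, ∀ g : Equiv.Perm (Fin n), g ∈ alternatingGroup (Fin n) →
      g.support.card ≤ s →
    ∃ L : List (Equiv.Perm (Fin n)), L.length ≤ (s + 1) / 2 ∧
      (∀ σ ∈ L, ∃ a b c d : Fin n, a ≠ b ∧ a ≠ c ∧ a ≠ d ∧ b ≠ c ∧ b ≠ d ∧ c ≠ d ∧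
        σ = Equiv.swap a b * Equiv.swap c d) ∧ L.prod = g := by
  intro s
  induction s using Nat.strong_induction_on with
  | _ s IH =>
    intro g hg hcard
    by_cases h1 : g = 1
    · exact ⟨[], by simp, by simp, by simp [h1]⟩
    by_cases hex : ∃ a c : Fin n, g a ≠ a ∧ g c ≠ c ∧ a ≠ c ∧ g a ≠ c ∧ g c ≠ a
    · obtain ⟨a, c, ha, hc, hac, hgac, hgca⟩ := hex
      have hgg : g a ≠ g c := fun h => hac (g.injective h)
      have hs1s1 : Equiv.swap a (g a) * Equiv.swap a (g a) = 1 := Equiv.swap_mul_self _ _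
      have hs2s2 : Equiv.swap c (g c) * Equiv.swap c (g c) = 1 := Equiv.swap_mul_self _ _
      have hmemsupp : ∀ x : Fin n, g x ≠ x → x ∈ g.support := fun x hx =>
        Equiv.Perm.mem_support.mpr hx
      have hA : a ∈ g.support := hmemsupp a ha
      have hC : c ∈ g.support := hmemsupp c hc
      have hGA : g a ∈ g.support := Equiv.Perm.apply_mem_support.mpr hA
      have hGC : g c ∈ g.support := Equiv.Perm.apply_mem_support.mpr hC
      set d := Equiv.swap a (g a) * Equiv.swap c (g c) with hd
      have hdsupp : d.support ⊆ g.support := by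
        intro x hx
        have := Equiv.Perm.support_mul_le (Equiv.swap a (g a)) (Equiv.swap c (g c)) hx
        rw [Finset.sup_eq_union, Finset.mem_union] at this
        rcases this with h | h
        · rw [Equiv.Perm.support_swap (Ne.symm ha)] at h
          simp only [Finset.mem_insert, Finset.mem_singleton] at h
          rcases h with rfl | rfl
          exacts [hA, hGA]
        · rw [Equiv.Perm.support_swap (Ne.symm hc)] at h
          simp only [Finset.mem_insert, Finset.mem_singleton] at h
          rcases h with rfl | rfl
          exacts [hC, hGC]
      set h := d * g with hh
      have hha : h a = a := by
        show Equiv.swap a (g a) (Equiv.swap c (g c) (g a)) = a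
        rw [Equiv.swap_apply_of_ne_of_ne hgac hgg, Equiv.swap_apply_right]
      have hhc : h c = c := by
        show Equiv.swap a (g a) (Equiv.swap c (g c) (g c)) = c
        rw [Equiv.swap_apply_right, Equiv.swap_apply_of_ne_of_ne (Ne.symm hac) (Ne.symm hgac)]
      have hhsupp : h.support ⊆ g.support \ {a, c} := by
        intro x hx
        rw [Finset.mem_sdiff]
        constructor
        · have := Equiv.Perm.support_mul_le d g hx
          rw [Finset.sup_eq_union, Finset.mem_union] at this
          rcases this with h' | h'
          · exact hdsupp h'
          · exact h'
        · simp only [Finset.mem_insert, Finset.mem_singleton]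
          rintro (rfl | rfl)
          · exact (Equiv.Perm.mem_support.mp hx) hha
          · exact (Equiv.Perm.mem_support.mp hx) hhc
      have hsub : ({a, c} : Finset (Fin n)) ⊆ g.support := by
        intro x hx
        simp only [Finset.mem_insert, Finset.mem_singleton] at hx
        rcases hx with rfl | rfl
        exacts [hA, hC]
      have hcard2 : ({a, c} : Finset (Fin n)).card = 2 := by
        rw [Finset.card_insert_of_notMem (by simpa using hac), Finset.card_singleton]
      have hhcard : h.support.card ≤ s - 2 := by
        have h1' := Finset.card_le_card hhsupp
        rw [Finset.card_sdiff_of_subset hsub, hcard2] at h1'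
        have h2' := Finset.card_le_card hsub
        omega
      have hs4 : 4 ≤ s := by
        have hsub4 : ({a, g a, c, g c} : Finset (Fin n)) ⊆ g.support := by
          intro x hx
          simp only [Finset.mem_insert, Finset.mem_singleton] at hx
          rcases hx with rfl | rfl | rfl | rfl
          exacts [hA, hGA, hC, hGC]
        have hne1 : a ∉ ({g a, c, g c} : Finset (Fin n)) := by
          simp only [Finset.mem_insert, Finset.mem_singleton]
          push_neg
          exact ⟨fun h' => ha h'.symm, hac, fun h' => hgca h'.symm⟩
        have hne2 : g a ∉ ({c, g c} : Finset (Fin n)) := by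
          simp only [Finset.mem_insert, Finset.mem_singleton]
          push_neg
          exact ⟨hgac, hgg⟩
        have hne3 : c ∉ ({g c} : Finset (Fin n)) := by
          simp only [Finset.mem_singleton]
          exact fun h' => hc h'.symm
        have h4 : ({a, g a, c, g c} : Finset (Fin n)).card = 4 := by
          rw [Finset.card_insert_of_notMem hne1, Finset.card_insert_of_notMem hne2,
            Finset.card_insert_of_notMem hne3, Finset.card_singleton]
        have := Finset.card_le_card hsub4
        omega
      have hdA : d ∈ alternatingGroup (Fin n) := by
        rw [Equiv.Perm.mem_alternatingGroup]
        simp [hd, Equiv.Perm.sign_swap (Ne.symm ha), Equiv.Perm.sign_swap (Ne.symm hc)]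
      have hhA : h ∈ alternatingGroup (Fin n) := mul_mem hdA hg
      obtain ⟨L', hL'len, hL'prop, hL'prod⟩ := IH (s - 2) (by omega) h hhA hhcard
      refine ⟨(Equiv.swap c (g c) * Equiv.swap a (g a)) :: L', ?_, ?_, ?_⟩
      · simp only [List.length_cons]
        omega
      · intro σ hσ
        rcases List.mem_cons.mp hσ with rfl | h'
        · exact ⟨c, g c, a, g a, Ne.symm hc, Ne.symm hac, Ne.symm hgac, hgca, Ne.symm hgg,
            Ne.symm ha, rfl⟩
        · exact hL'prop σ h'
      · simp only [List.prod_cons, hL'prod, hh, hd]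
        calc Equiv.swap c (g c) * Equiv.swap a (g a) *
              (Equiv.swap a (g a) * Equiv.swap c (g c) * g)
            = Equiv.swap c (g c) * (Equiv.swap a (g a) * Equiv.swap a (g a)) *
              (Equiv.swap c (g c) * g) := by group
          _ = Equiv.swap c (g c) * (Equiv.swap c (g c) * g) := by rw [hs1s1, mul_one]
          _ = (Equiv.swap c (g c) * Equiv.swap c (g c)) * g := by rw [mul_assoc]
          _ = g := by rw [hs2s2, one_mul]
    · -- no good pair exists: g is a 3-cycle
      push_neg at hex
      obtain ⟨a, ha⟩ : ∃ a : Fin n, g a ≠ a := by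
        by_contra h'
        push_neg at h'
        exact h1 (Equiv.ext fun x => h' x)
      have hab : a ≠ g a := Ne.symm ha
      have hgb : g (g a) ≠ g a := fun h' => ha (g.injective h')
      by_cases hba : g (g a) = a
      · -- g would be a transposition, contradicting evenness
        exfalso
        have hg_eq : g = Equiv.swap a (g a) := by
          apply Equiv.ext
          intro x
          by_cases hx1 : x = a
          · subst hx1; rw [Equiv.swap_apply_left]
          by_cases hx2 : x = g a
          · subst hx2; rw [Equiv.swap_apply_right, hba]
          rw [Equiv.swap_apply_of_ne_of_ne hx1 hx2]
          by_contra hgx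
          have h' := hex a x ha hgx (Ne.symm hx1) (Ne.symm hx2)
          exact hx2 (g.injective (h'.trans hba.symm))
        rw [Equiv.Perm.mem_alternatingGroup, hg_eq, Equiv.Perm.sign_swap hab] at hg
        exact absurd hg (by decide)
      · have hgc : g (g (g a)) ≠ g (g a) := fun h' => hgb (g.injective h')
        have hca : g (g a) ≠ a := hba
        have hgca : g (g (g a)) = a :=
          hex a (g (g a)) ha hgc (Ne.symm hca) (Ne.symm hgb)
        have hgfix : ∀ x : Fin n, x ≠ a → x ≠ g a → x ≠ g (g a) → g x = x := by
          intro x hx1 hx2 hx3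
          by_contra hgx
          have h' := hex a x ha hgx (Ne.symm hx1) (Ne.symm hx2)
          exact hx3 (g.injective (h'.trans hgca.symm))
        have hbc : g a ≠ g (g a) := Ne.symm hgb
        have hac2 : a ≠ g (g a) := Ne.symm hca
        have hg_eq : g = Equiv.swap a (g a) * Equiv.swap (g a) (g (g a)) := by
          apply Equiv.ext
          intro x
          by_cases hx1 : x = a
          · subst hx1
            rw [Equiv.Perm.mul_apply, Equiv.swap_apply_of_ne_of_ne hab hac2,
              Equiv.swap_apply_left]
          by_cases hx2 : x = g a
          · subst hx2
            rw [Equiv.Perm.mul_apply, Equiv.swap_apply_left,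
              Equiv.swap_apply_of_ne_of_ne hca hgb]
          by_cases hx3 : x = g (g a)
          · subst hx3
            rw [Equiv.Perm.mul_apply, Equiv.swap_apply_right, Equiv.swap_apply_right, hgca]
          rw [Equiv.Perm.mul_apply, Equiv.swap_apply_of_ne_of_ne hx2 hx3,
            Equiv.swap_apply_of_ne_of_ne hx1 hx2, hgfix x hx1 hx2 hx3]
        -- pick two points outside {a, g a, g (g a)}
        have h3card : ({a, g a, g (g a)} : Finset (Fin n)).card = 3 := by
          rw [Finset.card_insert_of_notMem (by
              simp only [Finset.mem_insert, Finset.mem_singleton]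
              push_neg
              exact ⟨hab, hac2⟩),
            Finset.card_insert_of_notMem (by simpa using hbc), Finset.card_singleton]
        obtain ⟨x, hx, y, hy, hxy⟩ : ∃ x ∈ (Finset.univ \ {a, g a, g (g a)} : Finset (Fin n)),
            ∃ y ∈ (Finset.univ \ {a, g a, g (g a)} : Finset (Fin n)), x ≠ y := by
          rw [← Finset.one_lt_card]
          have hcompl : (Finset.univ \ {a, g a, g (g a)} : Finset (Fin n)).card =
              n - 3 := by
            rw [← Finset.compl_eq_univ_sdiff, Finset.card_compl, h3card, Fintype.card_fin]
          omega
        simp only [Finset.mem_sdiff, Finset.mem_insert, Finset.mem_singleton] at hx hy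
        push_neg at hx hy
        obtain ⟨-, hxa, hxb, hxc⟩ := hx
        obtain ⟨-, hya, hyb, hyc⟩ := hy
        have hs3 : 3 ≤ s := by
          have hsub : ({a, g a, g (g a)} : Finset (Fin n)) ⊆ g.support := by
            intro z hz
            simp only [Finset.mem_insert, Finset.mem_singleton] at hz
            rcases hz with rfl | rfl | rfl
            exacts [Equiv.Perm.mem_support.mpr ha, Equiv.Perm.mem_support.mpr hgb,
              Equiv.Perm.mem_support.mpr hgc]
          have := Finset.card_le_card hsub
          omega
        refine ⟨[Equiv.swap a (g a) * Equiv.swap x y,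
            Equiv.swap x y * Equiv.swap (g a) (g (g a))], ?_, ?_, ?_⟩
        · simp only [List.length_cons, List.length_nil]
          omega
        · intro σ hσ
          rcases List.mem_cons.mp hσ with rfl | hσ'
          · exact ⟨a, g a, x, y, hab, Ne.symm hxa, Ne.symm hya, Ne.symm hxb, Ne.symm hyb,
              hxy, rfl⟩
          rcases List.mem_cons.mp hσ' with rfl | hσ''
          · exact ⟨x, y, g a, g (g a), hxy, hxb, hxc, hyb, hyc, hbc, rfl⟩
          · exact absurd hσ'' List.not_mem_nil
        · have hxyxy : Equiv.swap x y * Equiv.swap x y = 1 := Equiv.swap_mul_self x y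
          simp only [List.prod_cons, List.prod_nil, mul_one]
          calc Equiv.swap a (g a) * Equiv.swap x y *
                (Equiv.swap x y * Equiv.swap (g a) (g (g a)))
              = Equiv.swap a (g a) * (Equiv.swap x y * Equiv.swap x y) *
                Equiv.swap (g a) (g (g a)) := by group
            _ = Equiv.swap a (g a) * Equiv.swap (g a) (g (g a)) := by
                rw [hxyxy, mul_one]
            _ = g := hg_eq.symm

theorem stmt_15 (n : ℕ) (hn : 5 ≤ n) (g : Equiv.Perm (Fin n))
    (hg : g ∈ alternatingGroup (Fin n)) :
    ∃ L : List (Equiv.Perm (Fin n)), L.length ≤ (n + 1) / 2 ∧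
      (∀ σ ∈ L, ∃ a b c d : Fin n, a ≠ b ∧ a ≠ c ∧ a ≠ d ∧ b ≠ c ∧ b ≠ d ∧ c ≠ d ∧
        σ = Equiv.swap a b * Equiv.swap c d) ∧ L.prod = g := by
  exact key_aux n hn n g hg (by simpa using Finset.card_le_univ g.support)
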